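/- arXiv:2410.18949 — 3 statements merged into one kernel-verified Lean document; each statement's English description precedes it below -/
import Mathlib

section
/- For a Schwartz function f : ℝ → ℂ and h > 0, the Poisson summation formula holds in the form ∑_{n∈ℤ} h·f(hn)·e^{-i n θ} = ∑_{m∈ℤ} f̂((θ + 2πm)/h) for every θ ∈ ℝ, where f̂(ξ) = ∫_ℝ f(x) e^{-i x ξ} dx. -/
open MeasureTheory Complex

open scoped FourierTransform

/-- Poisson summation for sampled Schwartz functions:
`∑_{n∈ℤ} h f(hn) e^{-inθ} = ∑_{m∈ℤ} f̂((θ+2πm)/h)` where `f̂(ξ) = ∫ f(x) e^{-ixξ} dx`. -/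
theorem poisson_summation_sampled (f : SchwartzMap ℝ ℂ) (h : ℝ) (hh : 0 < h) (θ : ℝ) :
    (∑' n : ℤ, (h : ℂ) * f (h * n) * Complex.exp (-Complex.I * n * θ))
      = ∑' m : ℤ, ∫ x : ℝ, f x * Complex.exp (-Complex.I * x * ((θ + 2 * Real.pi * m) / h)) := by
  -- the rescaled function g x = f (h x)
  set u : ℝˣ := Units.mk0 h hh.ne'
  set e : ℝ ≃L[ℝ] ℝ := ContinuousLinearEquiv.unitsEquivAut ℝ u
  set g : SchwartzMap ℝ ℂ := SchwartzMap.compCLMOfContinuousLinearEquiv ℝ e f with hg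
  have hgapp : ∀ x : ℝ, g x = f (h * x) := by
    intro x
    simp [hg]
    congr 1
    simp [e, u, ContinuousLinearEquiv.unitsEquivAut_apply, mul_comm]
  -- w = inverse Fourier transform of g
  set w : SchwartzMap ℝ ℂ := (FourierTransform.fourierCLE ℝ (SchwartzMap ℝ ℂ)).symm g with hw
  have hwF : SchwartzMap.fourierTransformCLM ℝ w = g := by
    have : FourierTransform.fourierCLE ℝ (SchwartzMap ℝ ℂ) w = g := by
      rw [hw, ContinuousLinearEquiv.apply_symm_apply]
    exact this
  have key := SchwartzMap.tsum_eq_tsum_fourier w (-(θ / (2 * Real.pi)))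
  rw [← SchwartzMap.fourierTransformCLM_apply ℝ, hwF] at key
  have hwapp : ∀ y : ℝ, w y = 𝓕 (g : ℝ → ℂ) (-y) := by
    intro y
    rw [hw, FourierTransform.fourierCLE_symm_apply, SchwartzMap.fourierInv_coe]
    exact Real.fourierInv_eq_fourier_neg g y
  have h2pi : (2 * Real.pi) ≠ 0 := by positivity
  have hπC : (Real.pi : ℂ) ≠ 0 := by exact_mod_cast Real.pi_ne_zero
  have hhC : (h : ℂ) ≠ 0 := by exact_mod_cast hh.ne'
  have hterm : ∀ m : ℤ,
      (∫ x : ℝ, f x * Complex.exp (-Complex.I * x * ((θ + 2 * Real.pi * m) / h)))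
        = (h : ℂ) * 𝓕 (g : ℝ → ℂ) (θ / (2 * Real.pi) + m) := by
    intro m
    have hcv := MeasureTheory.Measure.integral_comp_mul_left
      (fun x : ℝ => f x * Complex.exp (-Complex.I * x * ((θ + 2 * Real.pi * m) / h))) h
    rw [abs_of_pos (by positivity : (0:ℝ) < h⁻¹)] at hcv
    have hC : (h : ℂ) ≠ 0 := by exact_mod_cast hh.ne'
    have key2 : (h : ℂ) * ∫ x : ℝ, f (h * x) * Complex.exp (-Complex.I * ((h * x : ℝ) : ℂ) * ((θ + 2 * Real.pi * m) / h))
        = ∫ x : ℝ, f x * Complex.exp (-Complex.I * x * ((θ + 2 * Real.pi * m) / h)) := by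
      rw [hcv, Complex.real_smul]
      push_cast
      rw [← mul_assoc, mul_inv_cancel₀ hC, one_mul]
    rw [← key2]
    congr 1
    rw [Real.fourier_eq']
    apply integral_congr_ae
    filter_upwards with x
    rw [hgapp, smul_eq_mul, mul_comm (f (h * x))]
    congr 1
    congr 1
    simp only [RCLike.inner_apply, conj_trivial]
    push_cast
    field_simp
  calc (∑' n : ℤ, (h : ℂ) * f (h * n) * Complex.exp (-Complex.I * n * θ))
      = ∑' n : ℤ, (h : ℂ) * (g n * fourier n (↑(-(θ / (2 * Real.pi))) : UnitAddCircle)) := by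
        apply tsum_congr; intro n
        rw [hgapp, fourier_coe_apply, mul_assoc]
        have hexp : (2 : ℂ) * (Real.pi : ℂ) * Complex.I * (n : ℂ)
            * ((-(θ / (2 * Real.pi)) : ℝ) : ℂ) / ((1 : ℝ) : ℂ)
            = -Complex.I * (n : ℂ) * (θ : ℂ) := by
          push_cast
          field_simp
        rw [hexp]
    _ = (h : ℂ) * ∑' n : ℤ, g n * fourier n (↑(-(θ / (2 * Real.pi))) : UnitAddCircle) :=
        tsum_mul_left
    _ = (h : ℂ) * ∑' n : ℤ, w (-(θ / (2 * Real.pi)) + n) := by rw [key]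
    _ = (h : ℂ) * ∑' n : ℤ, 𝓕 (g : ℝ → ℂ) (θ / (2 * Real.pi) + (-n : ℤ)) := by
        congr 1
        apply tsum_congr; intro n
        rw [hwapp]
        congr 1
        push_cast
        ring
    _ = (h : ℂ) * ∑' m : ℤ, 𝓕 (g : ℝ → ℂ) (θ / (2 * Real.pi) + m) := by
        congr 1
        exact (Equiv.neg ℤ).tsum_eq fun m : ℤ => 𝓕 (g : ℝ → ℂ) (θ / (2 * Real.pi) + m)
    _ = ∑' m : ℤ, (h : ℂ) * 𝓕 (g : ℝ → ℂ) (θ / (2 * Real.pi) + m) := tsum_mul_left.symm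
    _ = ∑' m : ℤ, ∫ x : ℝ, f x * Complex.exp (-Complex.I * x * ((θ + 2 * Real.pi * m) / h)) := by
        apply tsum_congr; intro m
        exact (hterm m).symm
end

section
/- Let h > 0 and let f, g ∈ L²(ℝ) both have Fourier transforms supported in [-π/h, π/h]. Then ∫_ℝ f(x) · conj(g(x)) dx = h ∑_{n∈ℤ} f(hn) · conj(g(hn)). In particular the map f ↦ (h^{1/2} f(hn))_{n∈ℤ} is an isometry from such band-limited functions in L²(ℝ) to ℓ²(ℤ). -/
open MeasureTheory Complex Set AddCircle
open scoped Real ComplexConjugate NNReal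

noncomputable section BLAll


/-- The equivalence between `ℤ` and the subgroup of multiples of `h`. -/
def zEquiv {h : ℝ} (hh : 0 < h) : ℤ ≃ AddSubgroup.zmultiples h :=
  Equiv.ofBijective (fun n => ⟨n • h, AddSubgroup.mem_zmultiples_iff.mpr ⟨n, rfl⟩⟩)
    ⟨fun m n hmn => (zsmul_left_strictMono hh).injective (by
        simpa using congrArg Subtype.val hmn),
      by rintro ⟨x, hx⟩
         obtain ⟨k, hk⟩ := AddSubgroup.mem_zmultiples_iff.mp hx
         exact ⟨k, Subtype.ext hk⟩⟩

@[simp] lemma zEquiv_vadd {h : ℝ} (hh : 0 < h) (n : ℤ) (x : ℝ) :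
    (zEquiv hh n) +ᵥ x = x + h * n := by
  show ((zEquiv hh n : AddSubgroup.zmultiples h) : ℝ) + x = x + h * n
  simp [zEquiv, Equiv.ofBijective]; push_cast; ring

lemma norm_exp_I_mul (s t : ℝ) : ‖Complex.exp (Complex.I * s * t)‖ = 1 := by
  rw [show (Complex.I * s * t : ℂ) = (s * t : ℝ) * Complex.I by push_cast; ring]
  exact Complex.norm_exp_ofReal_mul_I _

/-- An integrable function on the circle with vanishing Fourier coefficients vanishes a.e. -/
lemma ae_zero_of_fourierCoeff_eq_zero {T : ℝ} [hT : Fact (0 < T)] {w : AddCircle T → ℂ}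
    (hw : Integrable w haarAddCircle) (hcoeff : ∀ n : ℤ, fourierCoeff w n = 0) :
    w =ᵐ[haarAddCircle] 0 := by
  have hint : ∀ φ : C(AddCircle T, ℂ), Integrable (fun x => φ x * w x) haarAddCircle := by
    intro φ
    exact hw.bdd_mul φ.continuous.aestronglyMeasurable (Filter.Eventually.of_forall fun x => φ.norm_coe_le_norm x)
  -- the functional
  set Φ : C(AddCircle T, ℂ) →ₗ[ℂ] ℂ :=
    { toFun := fun φ => ∫ x, φ x * w x ∂haarAddCircle
      map_add' := by
        intro φ ψ
        simp only [ContinuousMap.add_apply]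
        rw [← integral_add (hint φ) (hint ψ)]
        congr 1; ext x; ring
      map_smul' := by
        intro c φ
        simp only [ContinuousMap.smul_apply, smul_eq_mul, RingHom.id_apply]
        rw [← integral_const_mul]
        congr 1; ext x; ring } with hΦ
  have hΦcont : ∃ C, ∀ φ : C(AddCircle T, ℂ), ‖Φ φ‖ ≤ C * ‖φ‖ := by
    refine ⟨∫ x, ‖w x‖ ∂haarAddCircle, fun φ => ?_⟩
    calc ‖∫ x, φ x * w x ∂haarAddCircle‖ ≤ ∫ x, ‖φ x * w x‖ ∂haarAddCircle :=
          norm_integral_le_integral_norm _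
      _ ≤ ∫ x, ‖φ‖ * ‖w x‖ ∂haarAddCircle := by
          refine integral_mono_of_nonneg (Filter.Eventually.of_forall fun x => norm_nonneg _)
            (hw.norm.const_mul ‖φ‖) (Filter.Eventually.of_forall fun x => ?_)
          show ‖φ x * w x‖ ≤ ‖φ‖ * ‖w x‖
          rw [norm_mul]
          exact mul_le_mul_of_nonneg_right (φ.norm_coe_le_norm x) (norm_nonneg _)
      _ = (∫ x, ‖w x‖ ∂haarAddCircle) * ‖φ‖ := by rw [integral_const_mul]; ring
  obtain ⟨C, hC⟩ := hΦcont
  set Φ' : C(AddCircle T, ℂ) →L[ℂ] ℂ := Φ.mkContinuous C hC with hΦ'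
  have hker : (Submodule.span ℂ (Set.range (@fourier T))).topologicalClosure ≤
      LinearMap.ker (Φ' : C(AddCircle T, ℂ) →ₗ[ℂ] ℂ) := by
    apply Submodule.topologicalClosure_minimal
    · rw [Submodule.span_le]
      rintro _ ⟨n, rfl⟩
      simp only [SetLike.mem_coe, LinearMap.mem_ker]
      show Φ (fourier n) = 0
      have : Φ (fourier n) = fourierCoeff w (-n) := by
        simp only [hΦ, LinearMap.coe_mk, AddHom.coe_mk]
        rw [fourierCoeff]
        congr 1; ext x; rw [neg_neg]; rw [smul_eq_mul]
      rw [this, hcoeff]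
    · exact ContinuousLinearMap.isClosed_ker Φ'
  have hΦzero : ∀ φ : C(AddCircle T, ℂ), (∫ x, φ x * w x ∂haarAddCircle) = 0 := by
    intro φ
    have : φ ∈ LinearMap.ker (Φ' : C(AddCircle T, ℂ) →ₗ[ℂ] ℂ) := by
      apply hker
      rw [span_fourier_closure_eq_top]
      trivial
    exact this
  -- test against indicators of closed sets
  apply ae_eq_zero_of_forall_setIntegral_isClosed_eq_zero hw
  intro s hs
  set fs := hs.apprSeq with hfs
  have h1 : ∀ n : ℕ, (∫ x, ((fs n x : ℝ) : ℂ) * w x ∂haarAddCircle) = 0 := by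
    intro n
    exact hΦzero ⟨fun x => ((fs n x : ℝ) : ℂ),
      Complex.continuous_ofReal.comp (NNReal.continuous_coe.comp (fs n).continuous)⟩
  have h2 : Filter.Tendsto (fun n => ∫ x, ((fs n x : ℝ) : ℂ) * w x ∂haarAddCircle)
      Filter.atTop (nhds (∫ x, (Set.indicator s (fun _ => (1:ℂ)) x) * w x ∂haarAddCircle)) := by
    apply tendsto_integral_of_dominated_convergence (fun x => ‖w x‖)
    · intro n
      exact (Complex.continuous_ofReal.comp
        (NNReal.continuous_coe.comp (fs n).continuous)).aestronglyMeasurable.mul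
        hw.aestronglyMeasurable
    · exact hw.norm
    · intro n
      refine Filter.Eventually.of_forall fun x => ?_
      rw [norm_mul]
      have : ‖((fs n x : ℝ) : ℂ)‖ ≤ 1 := by
        rw [Complex.norm_real, Real.norm_eq_abs, _root_.abs_of_nonneg (NNReal.coe_nonneg _)]
        exact_mod_cast HasOuterApproxClosed.apprSeq_apply_le_one hs n x
      calc ‖((fs n x : ℝ) : ℂ)‖ * ‖w x‖ ≤ 1 * ‖w x‖ :=
            mul_le_mul_of_nonneg_right this (norm_nonneg _)
        _ = ‖w x‖ := one_mul _
    · refine Filter.Eventually.of_forall fun x => ?_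
      have hx : Filter.Tendsto (fun n => fs n x) Filter.atTop
          (nhds (Set.indicator s (fun _ => (1:ℝ≥0)) x)) := by
        have := HasOuterApproxClosed.tendsto_apprSeq hs
        rw [tendsto_pi_nhds] at this
        exact this x
      have h5 := (((Complex.continuous_ofReal.comp NNReal.continuous_coe).tendsto _).comp
        hx).mul_const (w x)
      simp only [Function.comp] at h5
      convert h5 using 2
      by_cases hxs : x ∈ s <;> simp [hxs]
  have h3 : (∫ x, (Set.indicator s (fun _ => (1:ℂ)) x) * w x ∂haarAddCircle) = 0 :=
    tendsto_nhds_unique h2 (by simpa [h1] using tendsto_const_nhds)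
  rw [← h3]
  rw [← integral_indicator hs.measurableSet]
  congr 1; ext x
  by_cases hxs : x ∈ s <;> simp [hxs]



lemma core_coeff (hh : 0 < h) [inst : Fact (0 < 2*π/h)] {f F : ℝ → ℂ}
    (hJ : ∀ x : ℝ, f x = (1/(2*π)) • ∫ ξ in Ioc (-(π/h)) (π/h), F ξ * Complex.exp (Complex.I*x*ξ))
    (t : ℝ) (n : ℤ) :
    fourierCoeff (AddCircle.liftIoc (2*π/h) (-(π/h))
        (fun ξ => F ξ * Complex.exp (Complex.I*t*ξ))) n
      = (h : ℂ) * f (t - h * n) := by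
  have hπ : (π:ℂ) ≠ 0 := by exact_mod_cast Real.pi_ne_zero
  have hhc : (h:ℂ) ≠ 0 := by exact_mod_cast hh.ne'
  have hπr : (0:ℝ) < π := Real.pi_pos
  rw [fourierCoeff_liftIoc_eq, fourierCoeffOn_eq_integral]
  have hle : -(π/h) ≤ -(π/h) + 2*π/h := by
    have : 0 < 2*π/h := inst.out
    linarith
  rw [intervalIntegral.integral_of_le hle]
  have hident : ∀ ξ ∈ Ioc (-(π/h)) (-(π/h) + 2*π/h),
      (fourier (-n) (ξ : AddCircle ((-(π/h) + 2*π/h) - (-(π/h))))) •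
        (F ξ * Complex.exp (Complex.I*t*ξ))
      = F ξ * Complex.exp (Complex.I*((t - h*n : ℝ):ℂ)*ξ) := by
    intro ξ _
    rw [smul_eq_mul, fourier_coe_apply, ← mul_assoc, mul_comm _ (F ξ), mul_assoc,
      ← Complex.exp_add]
    have : ((-(π/h) + 2*π/h) - (-(π/h)) : ℝ) = 2*π/h := by ring
    rw [this]
    have harg : (2 * (π:ℂ) * Complex.I * ((-n : ℤ):ℂ) * (ξ:ℂ) / ((2*π/h : ℝ):ℂ)
        + Complex.I*(t:ℂ)*(ξ:ℂ) : ℂ) = Complex.I * ((t - h*n : ℝ):ℂ) * (ξ:ℂ) := by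
      push_cast
      field_simp
      ring
    rw [harg]
  rw [setIntegral_congr_fun measurableSet_Ioc hident]
  have hIoc : (Ioc (-(π/h)) (-(π/h) + 2*π/h)) = Ioc (-(π/h)) (π/h) := by
    congr 1; ring
  rw [hIoc]
  have hJ' : (∫ ξ in Ioc (-(π/h)) (π/h), F ξ * Complex.exp (Complex.I*((t - h*n : ℝ):ℂ)*ξ))
      = (2*π : ℝ) • f (t - h*n) := by
    rw [hJ (t - h*n), smul_smul]
    have : (2*π) * (1/(2*π)) = 1 := by field_simp
    rw [this, one_smul]
  rw [hJ', smul_smul]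
  have hcoe : (1 / ((-(π/h) + 2*π/h) - (-(π/h)))) * (2*π) = h := by
    have : ((-(π/h) + 2*π/h) - (-(π/h)) : ℝ) = 2*π/h := by ring
    rw [this]
    field_simp
  rw [hcoe, Complex.real_smul]

lemma sm_lift {T a : ℝ} [Fact (0 < T)] {F : ℝ → ℂ} (hF : StronglyMeasurable F) (t : ℝ) :
    StronglyMeasurable (AddCircle.liftIoc T a (fun ξ => F ξ * Complex.exp (Complex.I*t*ξ))) := by
  have hρ : Measurable (fun z : AddCircle T => ((AddCircle.measurableEquivIoc T a z : ℝ))) :=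
    measurable_subtype_coe.comp (AddCircle.measurableEquivIoc T a).measurable
  have heq : AddCircle.liftIoc T a (fun ξ => F ξ * Complex.exp (Complex.I*t*ξ))
      = fun z => F ((AddCircle.measurableEquivIoc T a z : ℝ)) *
          Complex.exp (Complex.I * t * ((AddCircle.measurableEquivIoc T a z : ℝ))) := rfl
  rw [heq]
  have h2 : Continuous fun x : ℝ => Complex.exp (Complex.I*t*x) := by continuity
  exact (hF.comp_measurable hρ).mul (h2.stronglyMeasurable.comp_measurable hρ)

lemma integrable_lift {T a : ℝ} [hT : Fact (0 < T)] {F : ℝ → ℂ}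
    (hFsm : StronglyMeasurable F) (hFint : Integrable F) (t : ℝ) :
    Integrable (AddCircle.liftIoc T a (fun ξ => F ξ * Complex.exp (Complex.I*t*ξ)))
      haarAddCircle := by
  set u := AddCircle.liftIoc T a (fun ξ => F ξ * Complex.exp (Complex.I*t*ξ)) with hu
  have hsm : StronglyMeasurable u := sm_lift hFsm t
  have hvol : Integrable u (volume : Measure (AddCircle T)) := by
    rw [← (AddCircle.measurePreserving_mk T a).map_eq]
    rw [integrable_map_measure hsm.aestronglyMeasurable AddCircle.measurable_mk'.aemeasurable]
    have : (u ∘ (fun x : ℝ => (x : AddCircle T)))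
        =ᵐ[volume.restrict (Ioc a (a + T))] fun ξ => F ξ * Complex.exp (Complex.I*t*ξ) := by
      filter_upwards [ae_restrict_mem measurableSet_Ioc] with x hx
      show u ((x : ℝ) : AddCircle T) = _
      exact AddCircle.liftIoc_coe_apply hx
    rw [integrable_congr this]
    have heq2 : (fun ξ : ℝ => F ξ * Complex.exp (Complex.I*t*ξ))
        = fun ξ : ℝ => Complex.exp (Complex.I*t*ξ) * F ξ := by ext ξ; ring
    rw [heq2]
    exact hFint.restrict.bdd_mul
      (Continuous.aestronglyMeasurable (by continuity))
      (Filter.Eventually.of_forall fun x => le_of_eq (norm_exp_I_mul t x))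
  have hvol' := hvol
  rw [AddCircle.volume_eq_smul_haarAddCircle] at hvol'
  exact (integrable_smul_measure (by simp [ENNReal.ofReal_eq_zero, hT.out, not_le]) (by simp)).mp hvol'





lemma fourierCoeff_sub {T : ℝ} [hT : Fact (0 < T)] {u v : AddCircle T → ℂ}
    (hu : Integrable u haarAddCircle) (hv : Integrable v haarAddCircle) (n : ℤ) :
    fourierCoeff (u - v) n = fourierCoeff u n - fourierCoeff v n := by
  have hb : ∀ x : AddCircle T, ‖(fourier (-n) x : ℂ)‖ ≤ 1 := by
    intro x
    rw [fourier_apply, Circle.norm_coe]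
  have hui : Integrable (fun x => (fourier (-n) x : ℂ) * u x) haarAddCircle :=
    hu.bdd_mul (map_continuous (fourier (-n))).aestronglyMeasurable (Filter.Eventually.of_forall hb)
  have hvi : Integrable (fun x => (fourier (-n) x : ℂ) * v x) haarAddCircle :=
    hv.bdd_mul (map_continuous (fourier (-n))).aestronglyMeasurable (Filter.Eventually.of_forall hb)
  simp only [fourierCoeff, smul_eq_mul, Pi.sub_apply]
  rw [← integral_sub hui hvi]
  congr 1; ext x; ring

lemma core_memLp (hh : 0 < h) [inst : Fact (0 < 2*π/h)] {f F : ℝ → ℂ}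
    (hFsm : StronglyMeasurable F) (hFint : Integrable F) (hf2 : MemLp f 2 volume)
    (hJ : ∀ x : ℝ, f x = (1/(2*π)) • ∫ ξ in Ioc (-(π/h)) (π/h), F ξ * Complex.exp (Complex.I*x*ξ))
    (t : ℝ) :
    MemLp (AddCircle.liftIoc (2*π/h) (-(π/h)) (fun ξ => F ξ * Complex.exp (Complex.I*t*ξ)))
      2 haarAddCircle := by
  classical
  -- the square-norm function
  set ψ : ℝ → ENNReal := fun x => ENNReal.ofReal (‖f x‖^2) with hψ
  have hψmeas : AEMeasurable ψ volume := by
    have : AEMeasurable (fun x => ‖f x‖^2) volume :=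
      ((hf2.aestronglyMeasurable.norm.aemeasurable).pow_const 2)
    exact this.ennreal_ofReal
  have hsq : Integrable (fun x => ‖f x‖^2) volume := by
    have h1 := hf2.integrable_norm_rpow (by norm_num) (by norm_num)
    have h2 : (fun x => ‖f x‖ ^ ((2:ENNReal)).toReal) = fun x => ‖f x‖^2 := by
      ext x
      rw [ENNReal.toReal_ofNat, show ((2:ℝ)) = ((2:ℕ):ℝ) by norm_num, Real.rpow_natCast]
    rwa [h2] at h1
  have hfin : ∫⁻ x, ψ x ∂volume ≠ ⊤ := by
    have h3 := hsq.hasFiniteIntegral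
    rw [hasFiniteIntegral_iff_norm] at h3
    have : ∀ x : ℝ, ψ x = ENNReal.ofReal ‖‖f x‖^2‖ := by
      intro x
      rw [hψ, Real.norm_eq_abs, _root_.abs_of_nonneg (by positivity)]
    simp only [this]
    exact h3.ne
  -- unfold over the fundamental domain
  have hFD := isAddFundamentalDomain_Ioc hh 0 (volume : Measure ℝ)
  have hvadd : ∀ (g : AddSubgroup.zmultiples h) (x : ℝ), g +ᵥ x = (g:ℝ) + x := fun _ _ => rfl
  have hmeas : ∀ g : AddSubgroup.zmultiples h,
      AEMeasurable (fun x => ψ (g +ᵥ x)) ((volume : Measure ℝ).restrict (Ioc 0 (0+h))) := by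
    intro g
    have : AEMeasurable (fun x : ℝ => ψ ((g:ℝ) + x)) volume :=
      hψmeas.comp_quasiMeasurePreserving
        (measurePreserving_add_left volume (g:ℝ)).quasiMeasurePreserving
    simpa [hvadd] using this.restrict
  have hunfold := hFD.lintegral_eq_tsum'' ψ
  rw [← lintegral_tsum hmeas] at hunfold
  have hae : ∀ᵐ x ∂((volume : Measure ℝ).restrict (Ioc 0 (0+h))),
      (∑' g : AddSubgroup.zmultiples h, ψ (g +ᵥ x)) < ⊤ :=
    ae_lt_top' (AEMeasurable.ennreal_tsum hmeas) (by rw [← hunfold]; exact hfin)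
  haveI : Filter.NeBot (ae ((volume : Measure ℝ).restrict (Ioc 0 (0+h)))) := by
    rw [ae_neBot, Ne, Measure.restrict_eq_zero]
    simp [Real.volume_Ioc, hh]
  obtain ⟨t₀, ht₀⟩ := hae.exists
  -- summability of samples
  have hsumZ : (∑' k : ℤ, ψ (t₀ + h * k)) < ⊤ := by
    have := (zEquiv hh).tsum_eq (fun g : AddSubgroup.zmultiples h => ψ (g +ᵥ t₀))
    rw [← this] at ht₀
    simpa [zEquiv_vadd hh] using ht₀
  have hr : Summable (fun k : ℤ => ‖f (t₀ + h * k)‖^2) := by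
    have h4 : (∑' k : ℤ, (((‖f (t₀ + h * k)‖^2 : ℝ).toNNReal : ℝ≥0) : ENNReal)) ≠ ⊤ := by
      have : ∀ k : ℤ, ψ (t₀ + h * k)
          = (((‖f (t₀ + h * k)‖^2 : ℝ).toNNReal : ℝ≥0) : ENNReal) := by
        intro k; simp [hψ, ENNReal.ofReal]
      simp only [← this]
      exact hsumZ.ne
    have h5 := ENNReal.tsum_coe_ne_top_iff_summable.mp h4
    have h6 := NNReal.summable_coe.mpr h5
    refine h6.congr fun k => ?_
    rw [Real.coe_toNNReal _ (by positivity)]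
  -- the candidate L² function
  set c : ℤ → ℂ := fun n => (h:ℂ) * f (t₀ - h * n) with hc
  have hcmem : Memℓp c 2 := by
    apply memℓp_gen
    have h7 : Summable (fun n : ℤ => h^2 * ‖f (t₀ + h * ((-n : ℤ) : ℝ))‖^2) :=
      ((hr.comp_injective (Equiv.neg ℤ).injective)).mul_left _
    refine h7.congr fun n => ?_
    rw [ENNReal.toReal_ofNat, show ((2:ℝ)) = ((2:ℕ):ℝ) by norm_num, Real.rpow_natCast]
    rw [hc, norm_mul, mul_pow, Complex.norm_real, Real.norm_eq_abs, _root_.sq_abs]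
    congr 3
    push_cast
    ring
  set v : Lp ℂ 2 (@haarAddCircle (2*π/h) inst) :=
    fourierBasis.repr.symm (⟨c, hcmem⟩ : lp (fun _ : ℤ => ℂ) 2) with hv
  have hvcoeff : ∀ n : ℤ, fourierCoeff ((v : AddCircle (2*π/h) → ℂ)) n = c n := by
    intro n
    rw [← fourierBasis_repr]
    rw [hv, LinearIsometryEquiv.apply_symm_apply]
  set u : AddCircle (2*π/h) → ℂ :=
    AddCircle.liftIoc (2*π/h) (-(π/h)) (fun ξ => F ξ * Complex.exp (Complex.I*t₀*ξ)) with hu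
  have huint : Integrable u haarAddCircle := integrable_lift hFsm hFint t₀
  have hvint : Integrable ((v : AddCircle (2*π/h) → ℂ)) haarAddCircle :=
    (Lp.memLp v).integrable one_le_two
  have hw0 : ∀ n : ℤ, fourierCoeff (u - (v : AddCircle (2*π/h) → ℂ)) n = 0 := by
    intro n
    rw [fourierCoeff_sub huint hvint, hvcoeff n, hu, core_coeff hh hJ t₀ n, hc, sub_self]
  have hae2 : u =ᵐ[@haarAddCircle (2*π/h) inst] (v : AddCircle (2*π/h) → ℂ) := by
    have := ae_zero_of_fourierCoeff_eq_zero ((huint.sub hvint)) hw0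
    exact (sub_ae_eq_zero _ _).mp this
  have hu2 : MemLp u 2 haarAddCircle := (Lp.memLp v).ae_eq hae2.symm
  -- transfer to arbitrary t
  refine hu2.of_le (sm_lift hFsm t).aestronglyMeasurable (Filter.Eventually.of_forall fun z => ?_)
  show ‖F ((AddCircle.equivIoc _ _ z : ℝ)) * Complex.exp (Complex.I * t * _)‖ ≤
    ‖F ((AddCircle.equivIoc _ _ z : ℝ)) * Complex.exp (Complex.I * t₀ * _)‖
  rw [norm_mul, norm_mul, norm_exp_I_mul, norm_exp_I_mul]





lemma hee (s r : ℝ) : (starRingEnd ℂ) (Complex.exp (Complex.I*s*r)) * Complex.exp (Complex.I*s*r) = 1 := by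
  rw [← Complex.exp_conj, ← Complex.exp_add]
  have : (starRingEnd ℂ) (Complex.I*(s:ℂ)*(r:ℂ)) + Complex.I*s*r = 0 := by
    simp only [map_mul, Complex.conj_I, Complex.conj_ofReal]
    ring
  rw [this, Complex.exp_zero]

lemma core_parseval (hh : 0 < h) [inst : Fact (0 < 2*π/h)] {f g F G : ℝ → ℂ}
    (hJF : ∀ x : ℝ, f x = (1/(2*π)) • ∫ ξ in Ioc (-(π/h)) (π/h), F ξ * Complex.exp (Complex.I*x*ξ))
    (hJG : ∀ x : ℝ, g x = (1/(2*π)) • ∫ ξ in Ioc (-(π/h)) (π/h), G ξ * Complex.exp (Complex.I*x*ξ))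
    (hMemF : ∀ t : ℝ, MemLp (AddCircle.liftIoc (2*π/h) (-(π/h))
      (fun ξ => F ξ * Complex.exp (Complex.I*t*ξ))) 2 haarAddCircle)
    (hMemG : ∀ t : ℝ, MemLp (AddCircle.liftIoc (2*π/h) (-(π/h))
      (fun ξ => G ξ * Complex.exp (Complex.I*t*ξ))) 2 haarAddCircle) :
    ∀ t : ℝ, (∑' n : ℤ, f (t + h*n) * (starRingEnd ℂ) (g (t + h*n)))
      = ∑' n : ℤ, f (h*n) * (starRingEnd ℂ) (g (h*n)) := by
  set uF : ℝ → AddCircle (2*π/h) → ℂ := fun t =>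
    AddCircle.liftIoc (2*π/h) (-(π/h)) (fun ξ => F ξ * Complex.exp (Complex.I*t*ξ)) with huF
  set uG : ℝ → AddCircle (2*π/h) → ℂ := fun t =>
    AddCircle.liftIoc (2*π/h) (-(π/h)) (fun ξ => G ξ * Complex.exp (Complex.I*t*ξ)) with huG
  set UF : ℝ → Lp ℂ 2 (@haarAddCircle (2*π/h) inst) := fun t => (hMemF t).toLp _ with hUF
  set UG : ℝ → Lp ℂ 2 (@haarAddCircle (2*π/h) inst) := fun t => (hMemG t).toLp _ with hUG
  -- pointwise independence of t of the product
  have hptw : ∀ t : ℝ, (fun z => (starRingEnd ℂ) (uG t z) * uF t z)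
      = fun z => (starRingEnd ℂ) (uG 0 z) * uF 0 z := by
    intro t
    ext z
    show (starRingEnd ℂ) (G _ * Complex.exp (Complex.I * t * _)) *
        (F _ * Complex.exp (Complex.I * t * _))
      = (starRingEnd ℂ) (G _ * Complex.exp (Complex.I * 0 * _)) *
        (F _ * Complex.exp (Complex.I * 0 * _))
    set ρ := ((AddCircle.equivIoc (2*π/h) (-(π/h)) z : ℝ))
    calc (starRingEnd ℂ) (G ρ * Complex.exp (Complex.I * t * ρ)) *
          (F ρ * Complex.exp (Complex.I * t * ρ))
        = ((starRingEnd ℂ) (G ρ) * F ρ) *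
            ((starRingEnd ℂ) (Complex.exp (Complex.I * t * ρ)) * Complex.exp (Complex.I * t * ρ)) := by
          rw [map_mul]; ring
      _ = ((starRingEnd ℂ) (G ρ) * F ρ) *
            ((starRingEnd ℂ) (Complex.exp (Complex.I * (0:ℝ) * ρ)) * Complex.exp (Complex.I * (0:ℝ) * ρ)) := by
          rw [hee, hee]
      _ = (starRingEnd ℂ) (G ρ * Complex.exp (Complex.I * (0:ℝ) * ρ)) *
            (F ρ * Complex.exp (Complex.I * (0:ℝ) * ρ)) := by
          rw [map_mul]; ring
  -- inner products don't depend on t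
  have hinner : ∀ t : ℝ, (inner ℂ (UG t) (UF t) : ℂ) = inner ℂ (UG 0) (UF 0) := by
    intro t
    rw [MeasureTheory.L2.inner_def, MeasureTheory.L2.inner_def]
    have hc1 : ∀ s : ℝ, (∫ z, (inner ℂ ((UG s : AddCircle (2*π/h) → ℂ) z)
        ((UF s : AddCircle (2*π/h) → ℂ) z) : ℂ) ∂haarAddCircle)
        = ∫ z, (starRingEnd ℂ) (uG s z) * uF s z ∂haarAddCircle := by
      intro s
      apply integral_congr_ae
      filter_upwards [(hMemF s).coeFn_toLp, (hMemG s).coeFn_toLp] with z hzF hzG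
      rw [RCLike.inner_apply, hzF, hzG]; exact mul_comm _ _
    rw [hc1, hc1, hptw t]
  -- Parseval: inner products as sums
  have hrepr : ∀ t : ℝ, (inner ℂ (UG t) (UF t) : ℂ)
      = ∑' n : ℤ, ((h:ℂ)^2 * (f (t - h*n) * (starRingEnd ℂ) (g (t - h*n)))) := by
    intro t
    have h1 := fourierBasis.repr.inner_map_map (UG t) (UF t)
    rw [← h1, lp.inner_eq_tsum]
    apply tsum_congr
    intro n
    have hF : fourierBasis.repr (UF t) n = (h:ℂ) * f (t - h*n) := by
      rw [fourierBasis_repr]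
      have : fourierCoeff ((UF t : AddCircle (2*π/h) → ℂ)) n = fourierCoeff (uF t) n := by
        apply integral_congr_ae
        filter_upwards [(hMemF t).coeFn_toLp] with z hz
        rw [hz]
      rw [this, huF]
      exact core_coeff hh hJF t n
    have hG : fourierBasis.repr (UG t) n = (h:ℂ) * g (t - h*n) := by
      rw [fourierBasis_repr]
      have : fourierCoeff ((UG t : AddCircle (2*π/h) → ℂ)) n = fourierCoeff (uG t) n := by
        apply integral_congr_ae
        filter_upwards [(hMemG t).coeFn_toLp] with z hz
        rw [hz]
      rw [this, huG]
      exact core_coeff hh hJG t n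
    rw [RCLike.inner_apply, hF, hG]
    rw [map_mul, Complex.conj_ofReal]
    ring
  -- final computation
  have hkey : ∀ t : ℝ, (h:ℂ)^2 * (∑' n : ℤ, f (t + h*n) * (starRingEnd ℂ) (g (t + h*n)))
      = (inner ℂ (UG t) (UF t) : ℂ) := by
    intro t
    rw [hrepr t, ← tsum_mul_left]
    rw [← (Equiv.neg ℤ).tsum_eq (fun n : ℤ =>
      (h:ℂ)^2 * (f (t + h*n) * (starRingEnd ℂ) (g (t + h*n))))]
    apply tsum_congr
    intro n
    have : t + h * ((Equiv.neg ℤ n : ℤ) : ℝ) = t - h * n := by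
      simp [Equiv.neg_apply]
      push_cast
      ring
    rw [this]
  intro t
  have hh2 : ((h:ℂ)^2) ≠ 0 := by
    have : (h:ℂ) ≠ 0 := by exact_mod_cast hh.ne'
    exact pow_ne_zero _ this
  have := (hkey t).trans ((hinner t).trans (hkey 0).symm)
  have h0 : ∀ n : ℤ, f (0 + h*n) * (starRingEnd ℂ) (g (0 + h*n))
      = f (h*n) * (starRingEnd ℂ) (g (h*n)) := by intro n; rw [zero_add]
  rw [tsum_congr h0] at this
  exact mul_left_cancel₀ hh2 this

lemma hJ_of (hh : 0 < h) {f F Fm : ℝ → ℂ}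
    (hFae : F =ᵐ[volume] Fm)
    (hFsupp : ∀ ξ : ℝ, π / h < |ξ| → F ξ = 0)
    (hfinv : ∀ x : ℝ, f x = (1 / (2 * π)) • ∫ ξ : ℝ, F ξ * Complex.exp (Complex.I * x * ξ)) :
    ∀ x : ℝ, f x = (1/(2*π)) • ∫ ξ in Ioc (-(π/h)) (π/h), Fm ξ * Complex.exp (Complex.I*x*ξ) := by
  intro x
  rw [hfinv x]
  congr 1
  have h1 : (∫ ξ : ℝ, F ξ * Complex.exp (Complex.I*x*ξ))
      = ∫ ξ in Icc (-(π/h)) (π/h), F ξ * Complex.exp (Complex.I*x*ξ) := by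
    symm
    apply setIntegral_eq_integral_of_forall_compl_eq_zero
    intro ξ hξ
    have habs : π/h < |ξ| := by
      simp only [mem_Icc, not_and_or, not_le] at hξ
      rw [lt_abs]
      rcases hξ with h'|h'
      · right; linarith
      · left; exact h'
    rw [hFsupp ξ habs, zero_mul]
  rw [h1, integral_Icc_eq_integral_Ioc]
  apply integral_congr_ae
  apply ae_restrict_of_ae
  filter_upwards [hFae] with ξ hξ
  rw [hξ]

lemma integrable_mul_conj {f g : ℝ → ℂ} (hf2 : MemLp f 2 volume) (hg2 : MemLp g 2 volume) :
    Integrable (fun x => f x * (starRingEnd ℂ) (g x)) volume := by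
  have hgc : MemLp (fun x => (starRingEnd ℂ) (g x)) 2 volume := by
    refine MemLp.of_le hg2 (RCLike.continuous_conj.comp_aestronglyMeasurable hg2.1) ?_
    filter_upwards with x
    rw [RCLike.norm_conj]
  have hmul : MemLp ((fun x => (starRingEnd ℂ) (g x)) • f) 1 volume :=
    hf2.smul hgc
  have h2 := memLp_one_iff_integrable.mp hmul
  refine h2.congr ?_
  filter_upwards with x
  show (starRingEnd ℂ) (g x) * f x = f x * (starRingEnd ℂ) (g x)
  ring

lemma integral_eq_const_D (hh : 0 < h) {φ : ℝ → ℂ} (hφ : Integrable φ volume) {D : ℂ}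
    (hD : ∀ t : ℝ, (∑' n : ℤ, φ (t + h * n)) = D) :
    (∫ x : ℝ, φ x) = (h:ℂ) * D := by
  have hFD := isAddFundamentalDomain_Ioc hh 0 (volume : Measure ℝ)
  haveI : Countable (AddSubgroup.zmultiples h) :=
    Countable.of_equiv ℤ (zEquiv hh)
  have h1 := hFD.integral_eq_tsum'' φ hφ
  have hAESM : ∀ gg : AddSubgroup.zmultiples h,
      AEStronglyMeasurable (fun x => φ (gg +ᵥ x)) (volume.restrict (Ioc 0 (0+h))) := by
    intro gg
    have : AEStronglyMeasurable (fun x : ℝ => φ ((gg:ℝ) + x)) volume :=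
      hφ.1.comp_quasiMeasurePreserving
        (measurePreserving_add_left volume (gg:ℝ)).quasiMeasurePreserving
    exact this.restrict
  have hfin : (∑' gg : AddSubgroup.zmultiples h,
      ∫⁻ x in Ioc 0 (0+h), ‖φ (gg +ᵥ x)‖₊ ∂volume) ≠ ⊤ := by
    rw [← hFD.lintegral_eq_tsum'' (fun x => (‖φ x‖₊ : ENNReal))]
    exact hφ.2.ne
  have h2 := integral_tsum hAESM hfin
  rw [← h2] at h1
  have h3 : ∀ x : ℝ, (∑' gg : AddSubgroup.zmultiples h, φ (gg +ᵥ x)) = D := by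
    intro x
    rw [← (zEquiv hh).tsum_eq (fun gg : AddSubgroup.zmultiples h => φ (gg +ᵥ x)), ← hD x]
    apply tsum_congr
    intro k
    rw [zEquiv_vadd]
  rw [h1]
  calc (∫ x in Ioc (0:ℝ) (0+h), (∑' gg : AddSubgroup.zmultiples h, φ (gg +ᵥ x)))
      = ∫ _x in Ioc (0:ℝ) (0+h), D := by
        apply integral_congr_ae
        filter_upwards with x
        rw [h3]
    _ = (volume (Ioc (0:ℝ) (0+h))).toReal • D := by rw [setIntegral_const]; rfl
    _ = (h:ℂ) * D := by
        rw [Real.volume_Ioc]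
        rw [show (0 + h - 0 : ℝ) = h by ring, ENNReal.toReal_ofReal hh.le, Complex.real_smul]


lemma main_part1 {h : ℝ} (hh : 0 < h) {f g F G : ℝ → ℂ}
    (hf2 : MemLp f 2 volume) (hg2 : MemLp g 2 volume)
    (hFint : Integrable F) (hGint : Integrable G)
    (hFsupp : ∀ ξ : ℝ, π / h < |ξ| → F ξ = 0)
    (hGsupp : ∀ ξ : ℝ, π / h < |ξ| → G ξ = 0)
    (hfinv : ∀ x : ℝ, f x = (1 / (2 * π)) •
      ∫ ξ : ℝ, F ξ * Complex.exp (Complex.I * x * ξ))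
    (hginv : ∀ x : ℝ, g x = (1 / (2 * π)) •
      ∫ ξ : ℝ, G ξ * Complex.exp (Complex.I * x * ξ)) :
    (∫ x : ℝ, f x * starRingEnd ℂ (g x))
      = (h : ℂ) * ∑' n : ℤ, f (h * n) * starRingEnd ℂ (g (h * n)) := by
  haveI : Fact (0 < 2*π/h) := ⟨by positivity⟩
  set Fm := hFint.1.mk F with hFm
  set Gm := hGint.1.mk G with hGm
  have hJF := hJ_of hh hFint.1.ae_eq_mk hFsupp hfinv
  have hJG := hJ_of hh hGint.1.ae_eq_mk hGsupp hginv
  have hFmint : Integrable Fm := hFint.congr hFint.1.ae_eq_mk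
  have hGmint : Integrable Gm := hGint.congr hGint.1.ae_eq_mk
  have hMemF := core_memLp hh hFint.1.stronglyMeasurable_mk hFmint hf2 hJF
  have hMemG := core_memLp hh hGint.1.stronglyMeasurable_mk hGmint hg2 hJG
  have hpar := core_parseval hh hJF hJG hMemF hMemG
  exact integral_eq_const_D hh (integrable_mul_conj hf2 hg2) hpar

end BLAll

open scoped Real in
/-- For band-limited L² functions `f, g` (Fourier transforms `F, G` supported in
`[-π/h, π/h]`), the inner product equals `h` times the sum over lattice samples:
`∫ f conj(g) = h ∑_n f(hn) conj(g(hn))`; in particular `f ↦ (h^{1/2} f(hn))_n` is an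
isometry into ℓ²: `∫ |f|² = h ∑_n |f(hn)|²`. -/
theorem band_limited_sampling_isometry (h : ℝ) (hh : 0 < h) (f g F G : ℝ → ℂ)
    (hf2 : MemLp f 2 volume) (hg2 : MemLp g 2 volume)
    (hFint : Integrable F) (hGint : Integrable G)
    (hFsupp : ∀ ξ : ℝ, Real.pi / h < |ξ| → F ξ = 0)
    (hGsupp : ∀ ξ : ℝ, Real.pi / h < |ξ| → G ξ = 0)
    (hfinv : ∀ x : ℝ, f x = (1 / (2 * Real.pi)) •
      ∫ ξ : ℝ, F ξ * Complex.exp (Complex.I * x * ξ))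
    (hginv : ∀ x : ℝ, g x = (1 / (2 * Real.pi)) •
      ∫ ξ : ℝ, G ξ * Complex.exp (Complex.I * x * ξ)) :
    (∫ x : ℝ, f x * starRingEnd ℂ (g x)) = (h : ℂ) * ∑' n : ℤ, f (h * n) * starRingEnd ℂ (g (h * n))
    ∧ (∫ x : ℝ, ‖f x‖ ^ 2) = h * ∑' n : ℤ, ‖f (h * n)‖ ^ 2 := by
  constructor
  · exact main_part1 hh hf2 hg2 hFint hGint hFsupp hGsupp hfinv hginv
  · have e2 := main_part1 hh hf2 hf2 hFint hFint hFsupp hFsupp hfinv hfinv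
    have hptc : ∀ z : ℂ, z * starRingEnd ℂ z = ((‖z‖^2 : ℝ) : ℂ) := by
      intro z
      rw [Complex.mul_conj]
      congr 1
      rw [Complex.sq_norm]
    simp only [hptc] at e2
    have hL : (∫ x : ℝ, ((‖f x‖^2 : ℝ) : ℂ)) = ((∫ x : ℝ, ‖f x‖^2 : ℝ) : ℂ) := integral_ofReal
    rw [hL] at e2
    rw [← Complex.ofReal_tsum] at e2
    rw [show ((h:ℂ) * ((∑' n : ℤ, ‖f (h * n)‖^2 : ℝ) : ℂ))
        = (((h * ∑' n : ℤ, ‖f (h * n)‖^2 : ℝ)) : ℂ) by push_cast; ring] at e2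
    exact_mod_cast e2
end

section
/- Let h > 0 and let f ∈ L²(ℝ) have Fourier transform supported in [-π/h, π/h]. Then f is uniquely determined by its samples on the lattice hℤ via the Nyquist–Shannon interpolation formula: for every x ∈ ℝ, f(x) = ∑_{n∈ℤ} sinc(π(x-hn)/h) · f(hn), where sinc(y) = sin(y)/y (with sinc(0)=1). -/
open MeasureTheory Complex Set
open scoped ENNReal NNReal
namespace NyqAux
section circle
variable {T : ℝ} [hT : Fact (0 < T)]
section
variable (t : ℝ)




lemma liftIoc_apply (w : ℝ → ℂ) (z : AddCircle T) :
    AddCircle.liftIoc T t w z = w (AddCircle.equivIoc T t z) := rfl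

lemma coe_equivIoc_coe {x : ℝ} (hx : x ∈ Ioc t (t + T)) :
    ((AddCircle.equivIoc T t (↑x : AddCircle T)) : ℝ) = x :=
  AddCircle.liftIoc_coe_apply (f := id) hx

lemma measurable_liftIoc {w : ℝ → ℂ} (hw : Measurable w) :
    Measurable (AddCircle.liftIoc T t w) := by
  have : AddCircle.liftIoc T t w
      = ((Set.Ioc t (t + T)).restrict w) ∘ (AddCircle.measurableEquivIoc T t) := rfl
  rw [this]
  exact (hw.comp measurable_subtype_coe).comp (AddCircle.measurableEquivIoc T t).measurable

lemma liftIoc_ae_eq {v w : ℝ → ℂ} (hvw : v =ᵐ[volume.restrict (Ioc t (t + T))] w) :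
    AddCircle.liftIoc T t v =ᵐ[volume] AddCircle.liftIoc T t w := by
  classical
  have hIoc : MeasurableSet (Ioc t (t + T)) := measurableSet_Ioc
  set N : Set ℝ := {ξ | v ξ ≠ w ξ} with hN
  have hN0 : volume (N ∩ Ioc t (t + T)) = 0 := by
    have := hvw
    rw [Filter.EventuallyEq, ae_iff, Measure.restrict_apply' hIoc] at this
    exact this
  obtain ⟨M, hMsub, hMmeas, hM0⟩ := exists_measurable_superset_of_null hN0
  set M' : Set ℝ := M ∩ Ioc t (t + T) with hM'
  have hM'meas : MeasurableSet M' := hMmeas.inter hIoc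
  have hM'0 : volume M' = 0 := measure_mono_null inter_subset_left hM0
  have hM'sub : N ∩ Ioc t (t + T) ⊆ M' := subset_inter hMsub inter_subset_right
  -- the bad set on the circle
  set B : Set (AddCircle T) := {z | ((AddCircle.equivIoc T t z : ℝ)) ∈ M'} with hB
  have hBmeas : MeasurableSet B := by
    have : B = (AddCircle.measurableEquivIoc T t) ⁻¹'
        ((fun x : Ioc t (t + T) => (x : ℝ)) ⁻¹' M') := rfl
    rw [this]
    exact (AddCircle.measurableEquivIoc T t).measurable
      (measurable_subtype_coe hM'meas)
  have hB0 : volume B = 0 := by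
    rw [← (AddCircle.measurePreserving_mk T t).map_eq,
      Measure.map_apply AddCircle.measurable_mk' hBmeas,
      Measure.restrict_apply' hIoc]
    have : (QuotientAddGroup.mk ⁻¹' B : Set ℝ) ∩ Ioc t (t + T) = M' := by
      ext ξ
      constructor
      · rintro ⟨hξB, hξI⟩
        have := coe_equivIoc_coe t hξI
        simpa [B, this] using hξB
      · intro hξ
        have hξI : ξ ∈ Ioc t (t + T) := hξ.2
        refine ⟨?_, hξI⟩
        show ((AddCircle.equivIoc T t ((ξ : ℝ) : AddCircle T) : ℝ)) ∈ M'
        rwa [coe_equivIoc_coe t hξI]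
    rw [this]
    exact hM'0
  refine measure_mono_null ?_ hB0
  intro z hz
  have hzI : ((AddCircle.equivIoc T t z : ℝ)) ∈ Ioc t (t + T) :=
    (AddCircle.equivIoc T t z).2
  have : ((AddCircle.equivIoc T t z : ℝ)) ∈ N := hz
  exact hM'sub ⟨this, hzI⟩

lemma aestronglyMeasurable_liftIoc {w : ℝ → ℂ}
    (hw : AEStronglyMeasurable w (volume.restrict (Ioc t (t + T)))) :
    AEStronglyMeasurable (AddCircle.liftIoc T t w) volume := by
  obtain ⟨g, hg, hwg⟩ := hw
  exact ⟨AddCircle.liftIoc T t g, (measurable_liftIoc t hg.measurable).stronglyMeasurable,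
    liftIoc_ae_eq t hwg⟩

lemma integrable_liftIoc {w : ℝ → ℂ} (hw : IntegrableOn w (Ioc t (t + T))) :
    Integrable (AddCircle.liftIoc T t w) volume := by
  rw [← (AddCircle.measurePreserving_mk T t).map_eq,
    integrable_map_measure
      (by rw [(AddCircle.measurePreserving_mk T t).map_eq]
          exact aestronglyMeasurable_liftIoc t hw.1)
      AddCircle.measurable_mk'.aemeasurable]
  refine hw.congr ?_
  filter_upwards [ae_restrict_mem measurableSet_Ioc] with ξ hξ
  exact (AddCircle.liftIoc_coe_apply hξ).symm

lemma integral_liftIoc {w : ℝ → ℂ}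
    (hw : AEStronglyMeasurable w (volume.restrict (Ioc t (t + T)))) :
    ∫ z, AddCircle.liftIoc T t w z = ∫ ξ in Ioc t (t + T), w ξ := by
  rw [← (AddCircle.measurePreserving_mk T t).map_eq,
    integral_map AddCircle.measurable_mk'.aemeasurable
      (by rw [(AddCircle.measurePreserving_mk T t).map_eq]
          exact aestronglyMeasurable_liftIoc t hw)]
  refine integral_congr_ae ?_
  filter_upwards [ae_restrict_mem measurableSet_Ioc] with ξ hξ
  exact AddCircle.liftIoc_coe_apply hξ


end




lemma integral_contMap_mul_eq_zero
    {g : AddCircle T → ℂ} (hg : Integrable g AddCircle.haarAddCircle)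
    (hcoeff : ∀ n : ℤ, fourierCoeff g n = 0) (φ : C(AddCircle T, ℂ)) :
    ∫ z, φ z * g z ∂AddCircle.haarAddCircle = 0 := by
  set μ := (AddCircle.haarAddCircle : Measure (AddCircle T)) with hμ
  have hint : ∀ ψ : C(AddCircle T, ℂ), Integrable (fun z => ψ z * g z) μ := fun ψ =>
    hg.bdd_mul ψ.continuous.aestronglyMeasurable (Filter.Eventually.of_forall fun z => ψ.norm_coe_le_norm z)
  let L₀ : C(AddCircle T, ℂ) →ₗ[ℂ] ℂ :=
    { toFun := fun ψ => ∫ z, ψ z * g z ∂μ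
      map_add' := fun ψ χ => by
        simp only [ContinuousMap.add_apply, add_mul]
        exact integral_add (hint ψ) (hint χ)
      map_smul' := fun c ψ => by
        simp only [ContinuousMap.smul_apply, smul_eq_mul, mul_assoc, RingHom.id_apply]
        exact integral_const_mul c _ }
  have hbound : ∀ ψ : C(AddCircle T, ℂ), ‖L₀ ψ‖ ≤ (∫ z, ‖g z‖ ∂μ) * ‖ψ‖ := by
    intro ψ
    have h1 : ‖∫ z, ψ z * g z ∂μ‖ ≤ ∫ z, ‖ψ z * g z‖ ∂μ := norm_integral_le_integral_norm _
    have h2 : ∫ z, ‖ψ z * g z‖ ∂μ ≤ ∫ z, ‖ψ‖ * ‖g z‖ ∂μ := by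
      refine integral_mono (hint ψ).norm (hg.norm.const_mul _) fun z => ?_
      rw [norm_mul]
      exact mul_le_mul_of_nonneg_right (ψ.norm_coe_le_norm z) (norm_nonneg _)
    have h3 : ∫ z, ‖ψ‖ * ‖g z‖ ∂μ = ‖ψ‖ * ∫ z, ‖g z‖ ∂μ := integral_const_mul _ _
    calc ‖L₀ ψ‖ ≤ ∫ z, ‖ψ‖ * ‖g z‖ ∂μ := le_trans h1 h2
    _ = (∫ z, ‖g z‖ ∂μ) * ‖ψ‖ := by rw [h3, mul_comm]
  let L : C(AddCircle T, ℂ) →L[ℂ] ℂ := L₀.mkContinuous _ hbound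
  have hker : ∀ m : ℤ, (fourier m : C(AddCircle T, ℂ)) ∈ L.ker := by
    intro m
    have : L (fourier m) = fourierCoeff g (-m) := by
      show ∫ z, fourier m z * g z ∂μ = fourierCoeff g (-m)
      rw [fourierCoeff]
      simp [smul_eq_mul, hμ]
    simp only [LinearMap.mem_ker, ContinuousLinearMap.coe_coe, this, hcoeff]
  have hspan : Submodule.span ℂ (Set.range (@fourier T)) ≤ L.ker :=
    Submodule.span_le.mpr (by rintro _ ⟨m, rfl⟩; exact hker m)
  have htop : (⊤ : Submodule ℂ C(AddCircle T, ℂ)) ≤ L.ker := by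
    rw [← span_fourier_closure_eq_top]
    exact Submodule.topologicalClosure_minimal _ hspan (ContinuousLinearMap.isClosed_ker L)
  exact htop (Submodule.mem_top) 

lemma setIntegral_closed_eq_zero
    {g : AddCircle T → ℂ} (hg : Integrable g AddCircle.haarAddCircle)
    (hcoeff : ∀ n : ℤ, fourierCoeff g n = 0) {s : Set (AddCircle T)} (hs : IsClosed s) :
    ∫ z in s, g z ∂AddCircle.haarAddCircle = 0 := by
  set μ := (AddCircle.haarAddCircle : Measure (AddCircle T)) with hμ
  rcases s.eq_empty_or_nonempty with rfl | hne
  · simp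
  · have hcont : ∀ k : ℕ, Continuous fun z : AddCircle T =>
        ((max 0 (1 - k * Metric.infDist z s) : ℝ) : ℂ) := by
      intro k
      exact Complex.continuous_ofReal.comp
        (continuous_const.max (continuous_const.sub
          (continuous_const.mul (Metric.continuous_infDist_pt s))))
    set φ : ℕ → AddCircle T → ℂ := fun k z => ((max 0 (1 - k * Metric.infDist z s) : ℝ) : ℂ)
      with hφ
    have hzero : ∀ k, ∫ z, φ k z * g z ∂μ = 0 := fun k =>
      integral_contMap_mul_eq_zero hg hcoeff ⟨φ k, hcont k⟩
    have hmeas : ∀ k : ℕ, AEStronglyMeasurable (fun z => φ k z * g z) μ := fun k =>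
      ((hcont k).aestronglyMeasurable).mul hg.1
    have hbd : ∀ k : ℕ, ∀ᵐ z ∂μ, ‖φ k z * g z‖ ≤ ‖g z‖ := by
      intro k
      refine Filter.Eventually.of_forall fun z => ?_
      rw [norm_mul]
      have h01 : ‖φ k z‖ ≤ 1 := by
        rw [hφ]
        simp only [Complex.norm_real, Real.norm_eq_abs]
        have hnn : (0:ℝ) ≤ (k:ℝ) * Metric.infDist z s :=
          mul_nonneg (Nat.cast_nonneg _) Metric.infDist_nonneg
        refine abs_le.mpr ⟨le_trans (by norm_num) (le_max_left _ _),
          max_le zero_le_one (by linarith)⟩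
      calc ‖φ k z‖ * ‖g z‖ ≤ 1 * ‖g z‖ :=
            mul_le_mul_of_nonneg_right h01 (norm_nonneg _)
      _ = ‖g z‖ := one_mul _
    have hlim : ∀ᵐ z ∂μ, Filter.Tendsto (fun k => φ k z * g z) Filter.atTop
        (nhds (s.indicator g z)) := by
      refine Filter.Eventually.of_forall fun z => ?_
      by_cases hzs : z ∈ s
      · have : ∀ k : ℕ, φ k z * g z = g z := by
          intro k
          rw [hφ]
          simp [Metric.infDist_zero_of_mem hzs]
        rw [Set.indicator_of_mem hzs]
        simp only [this]
        exact tendsto_const_nhds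
      · have hd : 0 < Metric.infDist z s := by
          rwa [← hs.notMem_iff_infDist_pos hne] 
        have : ∀ᶠ k : ℕ in Filter.atTop, φ k z * g z = 0 := by
          have : ∀ᶠ k : ℕ in Filter.atTop, (1:ℝ) ≤ k * Metric.infDist z s := by
            obtain ⟨N, hN⟩ := exists_nat_ge (1 / Metric.infDist z s)
            refine Filter.eventually_atTop.mpr ⟨N, fun k hk => ?_⟩
            have : (1:ℝ) / Metric.infDist z s ≤ k := le_trans hN (Nat.cast_le.mpr hk)
            rw [div_le_iff₀ hd] at this
            linarith
          filter_upwards [this] with k hk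
          rw [hφ]
          have : max 0 (1 - k * Metric.infDist z s) = 0 := max_eq_left (by linarith)
          simp [this]
        rw [Set.indicator_of_notMem hzs]
        exact Filter.Tendsto.congr' (this.mono fun k hk => hk.symm) tendsto_const_nhds
    have := tendsto_integral_of_dominated_convergence (fun z => ‖g z‖) hmeas hg.norm hbd hlim
    simp only [hzero] at this
    have h0 : ∫ z, s.indicator g z ∂μ = 0 := (tendsto_const_nhds_iff.mp this).symm
    rwa [integral_indicator hs.measurableSet] at h0

theorem ae_zero_of_fourierCoeff_eq_zero
    {g : AddCircle T → ℂ} (hg : Integrable g AddCircle.haarAddCircle)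
    (hcoeff : ∀ n : ℤ, fourierCoeff g n = 0) : g =ᵐ[AddCircle.haarAddCircle] 0 :=
  ae_eq_zero_of_forall_setIntegral_isClosed_eq_zero hg
    (fun _ hs => setIntegral_closed_eq_zero hg hcoeff hs)





lemma fourierCoeff_congr_ae {u v : AddCircle T → ℂ}
    (h : u =ᵐ[AddCircle.haarAddCircle] v) (n : ℤ) : fourierCoeff u n = fourierCoeff v n :=
  integral_congr_ae (h.mono fun z hz => by dsimp only; rw [hz])

lemma integrable_fourier_smul {n : ℤ} {g : AddCircle T → ℂ}
    (hg : Integrable g AddCircle.haarAddCircle) :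
    Integrable (fun z => fourier (-n) z • g z) AddCircle.haarAddCircle := by
  simpa [smul_eq_mul] using hg.bdd_mul ((fourier (-n)).continuous.aestronglyMeasurable)
    (c := 1) (Filter.Eventually.of_forall fun z => by
      simpa [fourier_norm] using (fourier (-n) : C(AddCircle T, ℂ)).norm_coe_le_norm z)

lemma ae_eq_L2_of_coeff {w : AddCircle T → ℂ}
    (hw : Integrable w AddCircle.haarAddCircle)
    (hl : Memℓp (fun n : ℤ => fourierCoeff w n) 2) :
    ∃ W : Lp ℂ 2 (@AddCircle.haarAddCircle T hT), w =ᵐ[AddCircle.haarAddCircle] W := by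
  set μ := (AddCircle.haarAddCircle : Measure (AddCircle T)) with hμ
  let c : lp (fun _ : ℤ => ℂ) 2 := ⟨fun n : ℤ => fourierCoeff w n, hl⟩
  let W : Lp ℂ 2 μ := fourierBasis.repr.symm c
  have hWc : ∀ n : ℤ, fourierCoeff (W : AddCircle T → ℂ) n = fourierCoeff w n := by
    intro n
    have h1 := fourierBasis_repr W n
    rw [show fourierBasis.repr W = c from fourierBasis.repr.apply_symm_apply c] at h1
    exact h1.symm
  have hWint : Integrable (W : AddCircle T → ℂ) μ :=
    (Lp.memLp W).integrable (by norm_num)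
  have hsub : ∀ n : ℤ, fourierCoeff (w - (W : AddCircle T → ℂ)) n = 0 := by
    intro n
    have h1 : fourierCoeff (w - (W : AddCircle T → ℂ)) n
        = ∫ z, (fourier (-n) z • w z - fourier (-n) z • (W : AddCircle T → ℂ) z) ∂μ := by
      rw [fourierCoeff]
      congr 1
      funext z
      simp [smul_sub, mul_sub]
    rw [h1, integral_sub (integrable_fourier_smul hw) (integrable_fourier_smul hWint)]
    rw [show (∫ z, fourier (-n) z • w z ∂μ) = fourierCoeff w n from rfl,
      show (∫ z, fourier (-n) z • (W : AddCircle T → ℂ) z ∂μ)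
        = fourierCoeff ((W : AddCircle T → ℂ)) n from rfl, hWc n, sub_self]
  have hae := ae_zero_of_fourierCoeff_eq_zero (hw.sub hWint) hsub
  refine ⟨W, ?_⟩
  filter_upwards [hae] with z hz
  exact sub_eq_zero.mp (by simpa using hz)

lemma parseval_inner {u v : AddCircle T → ℂ}
    (hu : MemLp u 2 AddCircle.haarAddCircle) (hv : MemLp v 2 AddCircle.haarAddCircle) :
    ∫ z, (starRingEnd ℂ) (u z) * v z ∂AddCircle.haarAddCircle
      = ∑' n : ℤ, (starRingEnd ℂ) (fourierCoeff u n) * fourierCoeff v n := by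
  have h1 : ∫ z, (starRingEnd ℂ) (u z) * v z ∂AddCircle.haarAddCircle
      = @inner ℂ _ _ (hu.toLp u) (hv.toLp v) := by
    rw [L2.inner_def]
    refine integral_congr_ae ?_
    filter_upwards [hu.coeFn_toLp, hv.coeFn_toLp] with z h1 h2
    rw [RCLike.inner_apply, h1, h2, mul_comm]
  rw [h1, ← fourierBasis.repr.inner_map_map (hu.toLp u) (hv.toLp v), lp.inner_eq_tsum]
  congr 1
  funext n
  rw [RCLike.inner_apply, fourierBasis_repr, fourierBasis_repr,
    fourierCoeff_congr_ae hu.coeFn_toLp n, fourierCoeff_congr_ae hv.coeFn_toLp n, mul_comm]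


end circle

lemma sin_formula (y : ℝ) :
    Complex.exp (Complex.I * y) - Complex.exp (-(Complex.I * y)) = 2 * Complex.I * Complex.sin y := by
  have h1 : Complex.exp (Complex.I * y) = Complex.cos y + Complex.sin y * Complex.I := by
    rw [mul_comm, Complex.exp_mul_I]
  have h2 : Complex.exp (-(Complex.I * y)) = Complex.cos y - Complex.sin y * Complex.I := by
    rw [show -(Complex.I * (y:ℂ)) = (-(y:ℂ)) * Complex.I by ring, Complex.exp_mul_I,
      Complex.cos_neg, Complex.sin_neg]
    ring
  rw [h1, h2]
  ring

section main

variable (h : ℝ) (f F : ℝ → ℂ)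

lemma integral_Ioc_F
    (hsupp : ∀ ξ : ℝ, Real.pi / h < |ξ| → F ξ = 0)
    (hinv : ∀ x : ℝ, f x = (1 / (2 * Real.pi)) •
      ∫ ξ : ℝ, F ξ * Complex.exp (Complex.I * x * ξ)) (t : ℝ) :
    ∫ ξ in Ioc (-(Real.pi/h)) (Real.pi/h), F ξ * Complex.exp (Complex.I * t * ξ)
      = (2 * Real.pi : ℝ) • f t := by
  have h1 : ∫ ξ in Ioc (-(Real.pi/h)) (Real.pi/h), F ξ * Complex.exp (Complex.I * t * ξ)
      = ∫ ξ in Icc (-(Real.pi/h)) (Real.pi/h), F ξ * Complex.exp (Complex.I * t * ξ) :=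
    (integral_Icc_eq_integral_Ioc).symm
  have h2 : ∫ ξ in Icc (-(Real.pi/h)) (Real.pi/h), F ξ * Complex.exp (Complex.I * t * ξ)
      = ∫ ξ : ℝ, F ξ * Complex.exp (Complex.I * t * ξ) := by
    refine setIntegral_eq_integral_of_forall_compl_eq_zero fun ξ hξ => ?_
    rw [mem_Icc, not_and_or] at hξ
    have : Real.pi / h < |ξ| := by
      rcases hξ with hξ | hξ
      · push_neg at hξ
        rw [lt_abs]; right; linarith
      · push_neg at hξ
        rw [lt_abs]; left; exact hξ
    rw [hsupp ξ this, zero_mul]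
  rw [h1, h2]
  rw [hinv t, smul_smul]
  have hπ : (2 * Real.pi) * (1 / (2 * Real.pi)) = 1 := by
    field_simp
  rw [hπ, one_smul]

lemma coeff_lift_F (hh : 0 < h) [hT : Fact (0 < 2 * Real.pi / h)]
    (hsupp : ∀ ξ : ℝ, Real.pi / h < |ξ| → F ξ = 0)
    (hinv : ∀ x : ℝ, f x = (1 / (2 * Real.pi)) •
      ∫ ξ : ℝ, F ξ * Complex.exp (Complex.I * x * ξ)) (x : ℝ) (n : ℤ) :
    fourierCoeff (AddCircle.liftIoc (2 * Real.pi / h) (-(Real.pi / h))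
        (fun ξ => F ξ * Complex.exp (Complex.I * x * ξ))) n
      = (h : ℂ) * f (x - h * n) := by
  have hπ : Real.pi ≠ 0 := Real.pi_ne_zero
  have hh0 : h ≠ 0 := ne_of_gt hh
  have hπC : (Real.pi : ℂ) ≠ 0 := by exact_mod_cast hπ
  have hhC : (h : ℂ) ≠ 0 := by exact_mod_cast hh0
  have hb : -(Real.pi / h) + 2 * Real.pi / h = Real.pi / h := by ring
  obtain ⟨t, ht⟩ : ∃ t : ℝ, x - h * n = t := ⟨_, rfl⟩
  rw [ht]
  rw [fourierCoeff_liftIoc_eq, fourierCoeffOn_eq_integral]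
  have hcong : ∀ ξ : ℝ,
      (fourier (-n) (ξ : AddCircle (-(Real.pi / h) + 2 * Real.pi / h - -(Real.pi / h))))
        • (F ξ * Complex.exp (Complex.I * x * ξ))
      = F ξ * Complex.exp (Complex.I * (t : ℝ) * ξ) := by
    intro ξ
    rw [fourier_coe_apply, smul_eq_mul, mul_left_comm, ← Complex.exp_add]
    congr 2
    rw [show (-(Real.pi / h) + 2 * Real.pi / h - -(Real.pi / h) : ℝ) = 2 * Real.pi / h by ring]
    field_simp
    push_cast
    rw [← ht]
    push_cast
    field_simp
    ring
  rw [intervalIntegral.integral_congr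
    (g := fun ξ => F ξ * Complex.exp (Complex.I * (t : ℝ) * ξ)) (fun ξ _ => hcong ξ)]
  have hab : -(Real.pi / h) ≤ -(Real.pi / h) + 2 * Real.pi / h := by
    have := hT.out; linarith
  rw [intervalIntegral.integral_of_le hab, hb,
    integral_Ioc_F h f F hsupp hinv t]
  rw [show (Real.pi / h - -(Real.pi / h) : ℝ) = 2 * Real.pi / h by ring, smul_smul]
  have hs : 1 / (2 * Real.pi / h) * (2 * Real.pi) = h := by
    field_simp
  rw [hs, Complex.real_smul]

lemma coeff_lift_exp (hh : 0 < h) [hT : Fact (0 < 2 * Real.pi / h)] (x : ℝ) (n : ℤ) :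
    fourierCoeff (AddCircle.liftIoc (2 * Real.pi / h) (-(Real.pi / h))
        (fun ξ => Complex.exp (-(Complex.I * x * ξ)))) n
      = ((if Real.pi * (x + h * n) / h = 0 then (1:ℝ)
          else Real.sin (Real.pi * (x + h * n) / h) / (Real.pi * (x + h * n) / h)) : ℂ) := by
  have hπ : Real.pi ≠ 0 := Real.pi_ne_zero
  have hh0 : h ≠ 0 := ne_of_gt hh
  have hπC : (Real.pi : ℂ) ≠ 0 := by exact_mod_cast hπ
  have hhC : (h : ℂ) ≠ 0 := by exact_mod_cast hh0
  have hb : -(Real.pi / h) + 2 * Real.pi / h = Real.pi / h := by ring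
  have hab : -(Real.pi / h) ≤ -(Real.pi / h) + 2 * Real.pi / h := by
    have := hT.out; linarith
  obtain ⟨t, ht⟩ : ∃ t : ℝ, x + h * n = t := ⟨_, rfl⟩
  rw [ht]
  obtain ⟨y, hy⟩ : ∃ y : ℝ, Real.pi * t / h = y := ⟨_, rfl⟩
  rw [hy]
  have hiff : (y = 0) ↔ t = 0 := by
    rw [← hy]
    constructor
    · intro h0
      rcases mul_eq_zero.mp (div_eq_zero_iff.mp h0 |>.resolve_right hh0) with h1 | h1
      · exact absurd h1 hπ
      · exact h1
    · intro h0; rw [h0]; simp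
  rw [fourierCoeff_liftIoc_eq, fourierCoeffOn_eq_integral]
  have hcong : ∀ ξ : ℝ,
      (fourier (-n) (ξ : AddCircle (-(Real.pi / h) + 2 * Real.pi / h - -(Real.pi / h))))
        • Complex.exp (-(Complex.I * x * ξ))
      = Complex.exp ((-(Complex.I * t)) * ξ) := by
    intro ξ
    rw [fourier_coe_apply, smul_eq_mul, ← Complex.exp_add]
    congr 1
    rw [show (-(Real.pi / h) + 2 * Real.pi / h - -(Real.pi / h) : ℝ) = 2 * Real.pi / h by ring]
    field_simp
    push_cast
    rw [← ht]
    push_cast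
    field_simp
    ring
  rw [intervalIntegral.integral_congr
    (g := fun ξ => Complex.exp ((-(Complex.I * (t:ℝ))) * ξ)) (fun ξ _ => hcong ξ)]
  by_cases ht0 : t = 0
  · rw [if_pos (hiff.mpr ht0)]
    have hone : (fun ξ : ℝ => Complex.exp ((-(Complex.I * (t:ℝ))) * ξ)) = fun _ : ℝ => (1 : ℂ) := by
      funext ξ
      rw [ht0]
      simp
    rw [hone, intervalIntegral.integral_const]
    rw [show ((-(Real.pi / h) + 2 * Real.pi / h) - -(Real.pi / h) : ℝ) = 2 * Real.pi / h by ring,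
      smul_smul]
    rw [show (1 / (2 * Real.pi / h)) * (2 * Real.pi / h) = 1 by field_simp, one_smul]
    norm_num
  · rw [if_neg (fun hc => ht0 (hiff.mp hc))]
    have htC : ((t : ℂ)) ≠ 0 := by exact_mod_cast ht0
    have hy0 : y ≠ 0 := fun hc => ht0 (hiff.mp hc)
    have hyC0 : ((y : ℝ) : ℂ) ≠ 0 := by exact_mod_cast hy0
    have hc : (-(Complex.I * (t:ℂ))) ≠ 0 := by
      simp [Complex.I_ne_zero, htC]
    rw [integral_exp_mul_complex hc, hb]
    have e1 : (-(Complex.I * (t:ℂ)) * ((Real.pi / h : ℝ) : ℂ)) = -(Complex.I * (y:ℂ)) := by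
      rw [← hy]; push_cast; ring
    have e2 : (-(Complex.I * (t:ℂ)) * ((-(Real.pi / h) : ℝ) : ℂ)) = Complex.I * (y:ℂ) := by
      rw [← hy]; push_cast; ring
    have hnum : Complex.exp (-(Complex.I * (t:ℂ)) * ((Real.pi / h : ℝ) : ℂ))
        - Complex.exp (-(Complex.I * (t:ℂ)) * ((-(Real.pi / h) : ℝ) : ℂ))
        = -(2 * Complex.I * Complex.sin (y:ℝ)) := by
      rw [e1, e2]
      linear_combination (-1 : ℂ) * sin_formula y
    rw [hnum, Complex.real_smul]
    have hquot : (-(2 * Complex.I * Complex.sin ((y:ℝ):ℂ)) / -(Complex.I * (t:ℂ)))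
        = 2 * Complex.sin ((y:ℝ):ℂ) / (t:ℂ) := by
      rw [div_eq_div_iff hc htC]
      ring
    rw [hquot]
    have hd : ((Real.pi:ℂ) * ((x:ℂ) + (h:ℂ) * (n:ℂ)) / (h:ℂ)) = ((y:ℝ):ℂ) := by
      rw [← hy, ← ht]; push_cast; ring
    rw [hd, Complex.ofReal_sin]
    have hyC : ((y : ℝ) : ℂ) = (Real.pi : ℂ) * t / h := by rw [← hy]; push_cast; ring
    rw [hyC]
    push_cast
    field_simp [hπC, hhC, htC]
    ring

end main



lemma exists_good_point (h : ℝ) (hh : 0 < h) (f : ℝ → ℂ) (hf2 : MemLp f 2 volume) :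
    ∃ x₀ : ℝ, Summable (fun n : ℤ => ‖f (x₀ - h * n)‖ ^ 2) := by
  classical
  set G : ℝ → ℝ≥0∞ := fun ξ => ((‖f ξ‖₊ : ℝ≥0∞)) ^ (2:ℕ) with hG
  have hmeas : AEMeasurable G volume := (hf2.1.enorm).pow_const 2
  have I2 : Integrable (fun x => ‖f x‖ ^ (2:ℕ)) volume := by
    have := hf2.integrable_norm_rpow (by norm_num) (by norm_num)
    have h22 : ((2:ℝ≥0∞)).toReal = (2:ℝ) := by norm_num
    rw [h22] at this
    refine this.congr (Filter.Eventually.of_forall fun x => ?_)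
    dsimp only
    rw [← Real.rpow_natCast ‖f x‖ 2]
    norm_num
  have hfin : ∫⁻ ξ, G ξ ∂volume < ⊤ := by
    have h1 := I2.2
    rw [HasFiniteIntegral] at h1
    refine lt_of_eq_of_lt ?_ h1
    refine lintegral_congr fun ξ => ?_
    rw [hG]
    simp only [nnnorm_pow, nnnorm_norm, ENNReal.coe_pow]
    simp [enorm_pow, enorm_norm, enorm_eq_nnnorm]
  have hGn : ∀ n : ℤ, AEMeasurable (fun x => G (x + h * n)) volume := fun n =>
    hmeas.comp_quasiMeasurePreserving
      (measurePreserving_add_right volume (h * n)).quasiMeasurePreserving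
  have htrans : ∀ n : ℤ, ∫⁻ x in Ioc 0 h, G (x + h * n)
      = ∫⁻ x in Ioc ((h:ℝ) * n) (h * n + h), G x := by
    intro n
    have him := (measurePreserving_add_right volume (h * n)).setLIntegral_comp_emb
      (measurableEmbedding_addRight (h * n)) G (Ioc 0 h)
    rw [him]
    congr 1
    rw [Set.image_add_const_Ioc]
    rw [zero_add, add_comm]
  have hdisj : Pairwise (Function.onFun Disjoint fun n : ℤ => Ioc ((h:ℝ) * n) (h * n + h)) := by
    intro i j hij
    simp only [Function.onFun]
    rw [Set.Ioc_disjoint_Ioc]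
    rcases lt_or_gt_of_ne hij with hlt | hlt
    · have : ((i:ℝ) + 1) ≤ (j:ℝ) := by exact_mod_cast hlt
      have h1 : h * i + h ≤ h * j := by nlinarith
      calc min (h * (i:ℝ) + h) (h * j + h) ≤ h * i + h := min_le_left _ _
      _ ≤ h * j := h1
      _ ≤ max (h * (i:ℝ)) (h * j) := le_max_right _ _
    · have : ((j:ℝ) + 1) ≤ (i:ℝ) := by exact_mod_cast hlt
      have h1 : h * j + h ≤ h * i := by nlinarith
      calc min (h * (i:ℝ) + h) (h * j + h) ≤ h * j + h := min_le_right _ _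
      _ ≤ h * i := h1
      _ ≤ max (h * (i:ℝ)) (h * j) := le_max_left _ _
  have hcover : (⋃ n : ℤ, Ioc ((h:ℝ) * n) (h * n + h)) = univ := by
    ext x
    simp only [mem_iUnion, mem_Ioc, mem_univ, iff_true]
    refine ⟨⌈x / h⌉ - 1, ?_, ?_⟩
    · push_cast
      have h2 : ((⌈x / h⌉ : ℝ) - 1) < x / h := by
        have := Int.ceil_lt_add_one (x / h)
        linarith
      have := mul_lt_mul_of_pos_left h2 hh
      rwa [mul_div_cancel₀ _ (ne_of_gt hh)] at this
    · push_cast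
      have h2 : x / h ≤ ((⌈x / h⌉ : ℝ)) := Int.le_ceil _
      have := mul_le_mul_of_nonneg_left h2 (le_of_lt hh)
      rw [mul_div_cancel₀ _ (ne_of_gt hh)] at this
      linarith
  have key : ∫⁻ x in Ioc (0:ℝ) h, ∑' n : ℤ, G (x + h * n) < ⊤ := by
    rw [lintegral_tsum fun n => (hGn n).restrict]
    have : ∀ n : ℤ, ∫⁻ x in Ioc (0:ℝ) h, G (x + h * n)
        = ∫⁻ x in Ioc ((h:ℝ) * n) (h * n + h), G x := htrans
    rw [tsum_congr this, ← lintegral_iUnion (fun n => measurableSet_Ioc) hdisj G, hcover,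
      Measure.restrict_univ]
    exact hfin
  have hne : (volume.restrict (Ioc (0:ℝ) h)) ≠ 0 := by
    rw [Ne, Measure.restrict_eq_zero]
    simp [Real.volume_Ioc, hh.ne', hh]
  haveI : (ae (volume.restrict (Ioc (0:ℝ) h))).NeBot := ae_neBot.mpr hne
  have hae : ∀ᵐ x ∂(volume.restrict (Ioc (0:ℝ) h)), (∑' n : ℤ, G (x + h * n)) < ⊤ :=
    ae_lt_top' (AEMeasurable.ennreal_tsum fun n => (hGn n).restrict) key.ne
  obtain ⟨x₀, hx₀⟩ := hae.exists
  refine ⟨x₀, ?_⟩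
  have hsum : ∑' n : ℤ, ((‖f (x₀ + h * n)‖₊ ^ (2:ℕ) : ℝ≥0) : ℝ≥0∞) ≠ ⊤ := by
    refine ne_of_lt (lt_of_eq_of_lt ?_ hx₀)
    refine tsum_congr fun n => ?_
    rw [hG, ENNReal.coe_pow]
  have hsnn : Summable fun n : ℤ => (‖f (x₀ + h * n)‖₊ ^ (2:ℕ) : ℝ≥0) :=
    ENNReal.tsum_coe_ne_top_iff_summable.mp hsum
  have hsr : Summable fun n : ℤ => (‖f (x₀ + h * n)‖ ^ (2:ℕ) : ℝ) := by
    have := NNReal.summable_coe.mpr hsnn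
    refine this.congr fun n => ?_
    push_cast
    rfl
  have hneg := (Equiv.neg ℤ).summable_iff.mpr hsr
  refine hneg.congr fun n => ?_
  show ‖f (x₀ + h * ((Equiv.neg ℤ n : ℤ) : ℝ))‖ ^ 2 = ‖f (x₀ - h * n)‖ ^ 2
  rw [show (x₀ + h * ((Equiv.neg ℤ n : ℤ) : ℝ)) = x₀ - h * n by
    simp [Equiv.neg_apply]; push_cast; ring]


end NyqAux

open MeasureTheory Complex
open Set NyqAux

/-- Nyquist–Shannon interpolation: a band-limited L² function (Fourier transform
supported in `[-π/h, π/h]`) is determined by its samples on `hℤ`: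
`f(x) = ∑_n sinc(π(x-hn)/h) f(hn)` with `sinc y = sin y / y`, `sinc 0 = 1`. -/
theorem nyquist_shannon (h : ℝ) (hh : 0 < h) (f F : ℝ → ℂ)
    (hf2 : MemLp f 2 volume)
    (hFint : Integrable F)
    (hsupp : ∀ ξ : ℝ, Real.pi / h < |ξ| → F ξ = 0)
    (hinv : ∀ x : ℝ, f x = (1 / (2 * Real.pi)) •
      ∫ ξ : ℝ, F ξ * Complex.exp (Complex.I * x * ξ)) :
    ∀ x : ℝ, f x = ∑' n : ℤ,
      ((if Real.pi * (x - h * n) / h = 0 then (1 : ℝ)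
        else Real.sin (Real.pi * (x - h * n) / h) / (Real.pi * (x - h * n) / h)) : ℂ)
        * f (h * n) := by
  intro x
  have hπpos := Real.pi_pos
  have hh0 : h ≠ 0 := ne_of_gt hh
  have hhC : (h : ℂ) ≠ 0 := by exact_mod_cast hh0
  haveI hfact : Fact (0 < 2 * Real.pi / h) := ⟨by positivity⟩
  -- measure bookkeeping
  have hvol : (volume : Measure (AddCircle (2 * Real.pi / h)))
      = ENNReal.ofReal (2 * Real.pi / h) • AddCircle.haarAddCircle :=
    AddCircle.volume_eq_smul_haarAddCircle
  have hof0 : ENNReal.ofReal (2 * Real.pi / h) ≠ 0 := by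
    simp only [ne_eq, ENNReal.ofReal_eq_zero, not_le]
    positivity
  have hofT : ENNReal.ofReal (2 * Real.pi / h) ≠ ⊤ := ENNReal.ofReal_ne_top
  have hhaar : (AddCircle.haarAddCircle : Measure (AddCircle (2 * Real.pi / h)))
      = (ENNReal.ofReal (2 * Real.pi / h))⁻¹ • (volume : Measure (AddCircle (2 * Real.pi / h))) := by
    rw [hvol, smul_smul, ENNReal.inv_mul_cancel hof0 hofT, one_smul]
  have hac : (AddCircle.haarAddCircle : Measure (AddCircle (2 * Real.pi / h))) ≪ volume := by
    rw [hhaar]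
    exact Measure.smul_absolutelyContinuous
  -- norm-one facts
  have hexp1 : ∀ s ξ : ℝ, ‖Complex.exp (Complex.I * s * ξ)‖ = 1 := by
    intro s ξ
    rw [Complex.norm_exp]
    simp
  have hexp1' : ∀ s ξ : ℝ, ‖Complex.exp (-(Complex.I * s * ξ))‖ = 1 := by
    intro s ξ
    rw [Complex.norm_exp]
    simp
  -- integrability of modulated F
  have hmod : ∀ s : ℝ, Integrable (fun ξ : ℝ => F ξ * Complex.exp (Complex.I * s * ξ)) volume := by
    intro s
    refine (hFint.bdd_mul ?_ (c := 1) (Filter.Eventually.of_forall fun ξ => le_of_eq (hexp1 s ξ))).congr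
      (Filter.Eventually.of_forall fun ξ => mul_comm _ _)
    exact (Complex.continuous_exp.comp
      ((continuous_const.mul Complex.continuous_ofReal))).aestronglyMeasurable
  obtain ⟨x₀, hx₀sum⟩ := exists_good_point h hh f hf2
  -- the modulated lift u₀ is in L²(haar)
  set u₀ : AddCircle (2 * Real.pi / h) → ℂ :=
    AddCircle.liftIoc (2 * Real.pi / h) (-(Real.pi / h))
      (fun ξ => F ξ * Complex.exp (Complex.I * x₀ * ξ)) with hu₀def
  have hu₀vol : Integrable u₀ volume := integrable_liftIoc _ ((hmod x₀).integrableOn)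
  have hu₀haar : Integrable u₀ AddCircle.haarAddCircle := by
    rw [hhaar]
    exact hu₀vol.smul_measure (ENNReal.inv_ne_top.mpr hof0)
  have hc₀ : ∀ n : ℤ, fourierCoeff u₀ n = (h : ℂ) * f (x₀ - h * n) := fun n =>
    coeff_lift_F h f F hh hsupp hinv x₀ n
  have hl2 : Memℓp (fun n : ℤ => fourierCoeff u₀ n) 2 := by
    refine memℓp_gen ?_
    have h2 : ((2 : ℝ≥0∞)).toReal = (2 : ℝ) := by norm_num
    rw [h2]
    have hs : Summable fun n : ℤ => ‖(h:ℂ)‖ ^ (2:ℕ) * ‖f (x₀ - h * n)‖ ^ (2:ℕ) :=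
      hx₀sum.mul_left _
    refine hs.congr fun n => ?_
    rw [hc₀ n, show (2:ℝ) = ((2:ℕ):ℝ) by norm_num, Real.rpow_natCast, norm_mul, mul_pow]
  obtain ⟨W₀, hW₀⟩ := ae_eq_L2_of_coeff hu₀haar hl2
  have hu₀2 : MemLp u₀ 2 AddCircle.haarAddCircle := (Lp.memLp W₀).ae_eq hW₀.symm
  -- the lift of F itself
  set u : AddCircle (2 * Real.pi / h) → ℂ :=
    AddCircle.liftIoc (2 * Real.pi / h) (-(Real.pi / h))
      (fun ξ => F ξ * Complex.exp (Complex.I * (0:ℝ) * ξ)) with hudef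
  have humeasv : AEStronglyMeasurable u volume :=
    aestronglyMeasurable_liftIoc _ (hmod 0).1.restrict
  have humeas : AEStronglyMeasurable u AddCircle.haarAddCircle := humeasv.mono_ac hac
  have hnorm : ∀ z, ‖u z‖ = ‖u₀ z‖ := by
    intro z
    rw [hudef, hu₀def, liftIoc_apply, liftIoc_apply]
    rw [norm_mul, norm_mul, hexp1, hexp1]
  have hu2 : MemLp u 2 AddCircle.haarAddCircle :=
    hu₀2.of_le humeas (Filter.Eventually.of_forall fun z => le_of_eq (hnorm z))
  -- the exponential lift
  set E : AddCircle (2 * Real.pi / h) → ℂ :=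
    AddCircle.liftIoc (2 * Real.pi / h) (-(Real.pi / h))
      (fun ξ => Complex.exp (-(Complex.I * x * ξ))) with hEdef
  have hEmeasv : AEStronglyMeasurable E volume :=
    aestronglyMeasurable_liftIoc _ ((Complex.continuous_exp.comp
      ((continuous_const.mul Complex.continuous_ofReal).neg)).aestronglyMeasurable).restrict
  have hEmeas : AEStronglyMeasurable E AddCircle.haarAddCircle := hEmeasv.mono_ac hac
  have hE2 : MemLp E 2 AddCircle.haarAddCircle := by
    refine MemLp.of_bound hEmeas 1 (Filter.Eventually.of_forall fun z => ?_)
    rw [hEdef, liftIoc_apply]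
    exact le_of_eq (hexp1' x _)
  -- Parseval
  have hpars := parseval_inner hE2 hu2
  -- LHS computation
  have hlhs : ∫ z, (starRingEnd ℂ) (E z) * u z ∂AddCircle.haarAddCircle = (h : ℂ) * f x := by
    have hfun : (fun z => (starRingEnd ℂ) (E z) * u z)
        = AddCircle.liftIoc (2 * Real.pi / h) (-(Real.pi / h))
            (fun ξ => F ξ * Complex.exp (Complex.I * x * ξ)) := by
      funext z
      rw [hEdef, hudef, liftIoc_apply, liftIoc_apply, liftIoc_apply]
      set ξ : ℝ := ((AddCircle.equivIoc (2 * Real.pi / h) (-(Real.pi / h)) z : ℝ))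
      rw [← Complex.exp_conj]
      rw [show (starRingEnd ℂ) (-(Complex.I * x * ξ)) = Complex.I * x * ξ by
        simp [Complex.conj_ofReal]]
      rw [show Complex.exp (Complex.I * (0:ℝ) * ξ) = 1 by norm_num]
      ring
    rw [hfun, hhaar, integral_smul_measure, integral_liftIoc _ (hmod x).1.restrict]
    rw [show -(Real.pi / h) + 2 * Real.pi / h = Real.pi / h by ring]
    rw [integral_Ioc_F h f F hsupp hinv x]
    rw [ENNReal.toReal_inv, ENNReal.toReal_ofReal (by positivity)]
    rw [smul_smul]
    rw [show (2 * Real.pi / h)⁻¹ * (2 * Real.pi) = h by field_simp]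
    rw [Complex.real_smul]
  -- coefficients
  have hcu : ∀ n : ℤ, fourierCoeff u n = (h : ℂ) * f (0 - h * n) := fun n =>
    coeff_lift_F h f F hh hsupp hinv 0 n
  have hcE : ∀ n : ℤ, fourierCoeff E n
      = ((if Real.pi * (x + h * n) / h = 0 then (1:ℝ)
          else Real.sin (Real.pi * (x + h * n) / h) / (Real.pi * (x + h * n) / h)) : ℂ) := fun n =>
    coeff_lift_exp h hh x n
  have hconjE : ∀ n : ℤ, (starRingEnd ℂ) (fourierCoeff E n) = fourierCoeff E n := by
    intro n
    rw [hcE n]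
    split_ifs with hcond
    · simp
    · have hw : (starRingEnd ℂ) ((Real.pi:ℂ) * ((x:ℂ) + (h:ℂ) * (n:ℂ)) / (h:ℂ))
          = (Real.pi:ℂ) * ((x:ℂ) + (h:ℂ) * (n:ℂ)) / (h:ℂ) := by
        simp [map_div₀, map_mul, map_add, Complex.conj_ofReal]
      rw [map_div₀, Complex.conj_ofReal, hw]
  -- assemble
  rw [hlhs] at hpars
  have hmain : (h : ℂ) * f x = ∑' n : ℤ, fourierCoeff E n * ((h : ℂ) * f (0 - h * n)) := by
    rw [hpars]
    exact tsum_congr fun n => by rw [hconjE n, hcu n]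
  have hre : ∑' n : ℤ, fourierCoeff E n * ((h : ℂ) * f (0 - h * n))
      = ∑' n : ℤ, (h : ℂ) *
        (((if Real.pi * (x - h * n) / h = 0 then (1 : ℝ)
          else Real.sin (Real.pi * (x - h * n) / h) / (Real.pi * (x - h * n) / h)) : ℂ)
          * f (h * n)) := by
    rw [← Equiv.tsum_eq (Equiv.neg ℤ)
      (fun n : ℤ => fourierCoeff E n * ((h : ℂ) * f (0 - h * n)))]
    refine tsum_congr fun n => ?_
    rw [hcE]
    simp only [Equiv.neg_apply, Int.cast_neg]
    rw [show (x + h * -(n:ℝ)) = x - h * n by ring]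
    rw [show ((0:ℝ) - h * -(n:ℝ)) = h * n by ring]
    rw [show ((x:ℂ) + (h:ℂ) * -(n:ℂ)) = (x:ℂ) - (h:ℂ) * (n:ℂ) by ring]
    ring
  have hfin : (h : ℂ) * f x = (h : ℂ) * ∑' n : ℤ,
      (((if Real.pi * (x - h * n) / h = 0 then (1 : ℝ)
        else Real.sin (Real.pi * (x - h * n) / h) / (Real.pi * (x - h * n) / h)) : ℂ)
        * f (h * n)) := by
    rw [hmain, hre, tsum_mul_left]
  exact mul_left_cancel₀ hhC hfin
end
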